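/- arXiv:2305.13537 — 2 statements merged into one kernel-verified Lean document; each statement's English description precedes it below -/
import Mathlib

section
/- Let C and C' be groupoids internal to the category of types, with composable-pair objects C₂, C₂', morphism objects C₁, C₁', compositions m, m', and associated involutions θ = ⟨i∘π₁, m⟩, φ = ⟨m, i∘π₂⟩ and θ', φ' respectively. Suppose f₂ : C₂ → C₂' and f₁ : C₁ → C₁' satisfy θ'∘f₂ = f₂∘θ, φ'∘f₂ = f₂∘φ and m'∘f₂ = f₁∘m. Then f₂(x, y) = (f₁(x), f₁(y)) for every composable pair (x, y); f₁ preserves composition, inverses and identities; and there exists a (unique) map f₀ : C₀ → C₀' on objects, given by f₀ = d'∘f₁∘e = c'∘f₁∘e, such that (f₂, f₁, f₀) is a morphism of internal groupoids (a functor). Hence the functor F from internal groupoids to involutive-2-links is full and faithful. -/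
open CategoryTheory

universe u

/-- A pair of parallel maps is *jointly monomorphic*. -/
def JointlyMono {A B C : Type u} (f : A → B) (g : A → C) : Prop :=
  ∀ a a', f a = f a' → g a = g a' → a = a'

/-- A commutative square of types which is both a pullback and a pushout
(an exact / bicartesian / Dolittle / pulation square). -/
def Bicartesian {P X Y Z : Type u} (fst : P → X) (snd : P → Y)
    (f : X → Z) (g : Y → Z) : Prop :=
  IsPullback (C := Type u) (TypeCat.ofHom fst) (TypeCat.ofHom snd) (TypeCat.ofHom f)
    (TypeCat.ofHom g) ∧
  IsPushout (C := Type u) (TypeCat.ofHom fst) (TypeCat.ofHom snd) (TypeCat.ofHom f)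
    (TypeCat.ofHom g)

/-- An involutive-2-link `(θ, φ, m)` is *unital* (Definition 1(1)). -/
def IsUnitalLink {C₂ C₁ : Type u} (θ φ : C₂ → C₂) (m : C₂ → C₁) : Prop :=
  JointlyMono m (m ∘ θ) ∧ JointlyMono m (m ∘ φ) ∧
  ∃ e₁ e₂ : C₁ → C₂,
    m ∘ e₁ = id ∧ m ∘ e₂ = id ∧
    θ ∘ e₂ = e₂ ∧ φ ∘ e₁ = e₁ ∧
    m ∘ θ ∘ φ ∘ e₂ = m ∘ φ ∘ θ ∘ e₁ ∧
    (m ∘ θ ∘ e₁) ∘ (m ∘ φ) = (m ∘ φ ∘ e₂) ∘ (m ∘ θ) ∧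
    (m ∘ θ ∘ e₁) ∘ m = (m ∘ θ ∘ e₁) ∘ (m ∘ θ) ∧
    (m ∘ φ ∘ e₂) ∘ m = (m ∘ φ ∘ e₂) ∘ (m ∘ φ)

/-- An involutive-2-link `(θ, φ, m)` is *associative* (Definition 1(2)):
the pair `(π₁, π₂) = (m ∘ φ, m ∘ θ)` is bi-exact and the induced morphisms
`m₁, m₂` satisfy `m ∘ m₁ = m ∘ m₂`. -/
def IsAssociativeLink {C₂ C₁ : Type u} (θ φ : C₂ → C₂) (m : C₂ → C₁) : Prop :=
  ∃ (C₀ : Type u) (d c : C₁ → C₀) (C₃ : Type u) (p₁ p₂ : C₃ → C₂),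
    Bicartesian (m ∘ φ) (m ∘ θ) d c ∧
    Bicartesian p₂ p₁ (m ∘ φ) (m ∘ θ) ∧
    ∃ m₁ m₂ : C₃ → C₂,
      (m ∘ φ) ∘ m₁ = m ∘ p₁ ∧ (m ∘ θ) ∘ m₁ = (m ∘ θ) ∘ p₂ ∧
      (m ∘ φ) ∘ m₂ = (m ∘ φ) ∘ p₁ ∧ (m ∘ θ) ∘ m₂ = m ∘ p₂ ∧
      m ∘ m₁ = m ∘ m₂

/-- An internal groupoid in the category of types, presented as a diagram
`C₂ ⇉ C₁ ⇉ C₀` where `C₂` is the canonical pullback of `d` and `c`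
(composable pairs), with composition `m`, inversion `i`, identities `e`. -/
structure IntGpd : Type (u + 1) where
  C₀ : Type u
  C₁ : Type u
  d : C₁ → C₀
  c : C₁ → C₀
  e : C₀ → C₁
  i : C₁ → C₁
  m : (y x : C₁) → d y = c x → C₁
  de : ∀ a, d (e a) = a
  ce : ∀ a, c (e a) = a
  dm : ∀ y x h, d (m y x h) = d x
  cm : ∀ y x h, c (m y x h) = c y
  di : ∀ x, d (i x) = c x
  ci : ∀ x, c (i x) = d x
  ii : ∀ x, i (i x) = x
  ie : ∀ a, i (e a) = e a
  idr : ∀ x (h : d x = c (e (d x))), m x (e (d x)) h = x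
  idl : ∀ x (h : d (e (c x)) = c x), m (e (c x)) x h = x
  invr : ∀ x (h : d x = c (i x)), m x (i x) h = e (c x)
  invl : ∀ x (h : d (i x) = c x), m (i x) x h = e (d x)
  assoc : ∀ z y x (hzy : d z = c y) (hyx : d y = c x)
    (h₁ : d (m z y hzy) = c x) (h₂ : d z = c (m y x hyx)),
    m (m z y hzy) x h₁ = m z (m y x hyx) h₂

namespace IntGpd

variable (G : IntGpd.{u})

/-- The object of composable pairs. -/
def Pairs : Type u := {p : G.C₁ × G.C₁ // G.d p.1 = G.c p.2}

theorem m_congr {y y' x x' : G.C₁} (hy : y = y') (hx : x = x')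
    (h : G.d y = G.c x) (h' : G.d y' = G.c x') :
    G.m y x h = G.m y' x' h' := by subst hy; subst hx; rfl

/-- Composition as a map on composable pairs. -/
def mp : G.Pairs → G.C₁ := fun p => G.m p.1.1 p.1.2 p.2

/-- The involution `θ = ⟨i ∘ π₁, m⟩`. -/
def θp : G.Pairs → G.Pairs :=
  fun p => ⟨(G.i p.1.1, G.mp p), by rw [G.di, mp, G.cm]⟩

/-- The involution `φ = ⟨m, i ∘ π₂⟩`. -/
def φp : G.Pairs → G.Pairs :=
  fun p => ⟨(G.mp p, G.i p.1.2), by rw [G.ci, mp, G.dm]⟩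

theorem m_inv_m (y x : G.C₁) (h : G.d y = G.c x)
    (h₂ : G.d (G.i y) = G.c (G.m y x h)) :
    G.m (G.i y) (G.m y x h) h₂ = x := by
  rw [← G.assoc (G.i y) y x (by rw [G.di]) h (by rw [G.dm]; exact h) h₂]
  rw [G.m_congr (y := G.m (G.i y) y (by rw [G.di])) (y' := G.e (G.c x))
    (x := x) (x' := x) (by rw [G.invl]; exact congrArg G.e h) rfl _ (by rw [G.de])]
  exact G.idl x _

theorem m_m_inv (y x : G.C₁) (h : G.d y = G.c x)
    (h₂ : G.d (G.m y x h) = G.c (G.i x)) :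
    G.m (G.m y x h) (G.i x) h₂ = y := by
  rw [G.assoc y x (G.i x) h (by rw [G.ci]) h₂ (by rw [G.cm, ← h])]
  rw [G.m_congr (y := y) (y' := y) (x := G.m x (G.i x) (by rw [G.ci]))
    (x' := G.e (G.d y)) rfl (by rw [G.invr]; exact congrArg G.e h.symm) _ (by rw [G.ce])]
  exact G.idr y _

theorem θθ : G.θp ∘ G.θp = id := by
  funext p
  apply Subtype.ext
  apply Prod.ext
  · simp [θp, mp, G.ii]
  · simp only [θp, mp, Function.comp_apply, id_eq]
    exact G.m_inv_m p.1.1 p.1.2 p.2 _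

theorem φφ : G.φp ∘ G.φp = id := by
  funext p
  apply Subtype.ext
  apply Prod.ext
  · simp only [φp, mp, Function.comp_apply, id_eq]
    exact G.m_m_inv p.1.1 p.1.2 p.2 _
  · simp [φp, mp, G.ii]

theorem braid : G.θp ∘ G.φp ∘ G.θp = G.φp ∘ G.θp ∘ G.φp := by
  funext p
  obtain ⟨⟨y, x⟩, hp⟩ := p
  have hyx : G.d y = G.c x := hp
  -- names
  apply Subtype.ext
  apply Prod.ext
  · -- first components
    simp only [Function.comp, θp, φp, mp]
    rw [G.m_inv_m, G.m_inv_m]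
  · simp only [Function.comp, θp, φp, mp]
    rw [G.m_m_inv, G.m_m_inv]

end IntGpd

/-- An involutive-2-link in the category of types: a map `m : A → B`
together with two interlinked involutions on its domain. -/
structure I2L : Type (u + 1) where
  A : Type u
  B : Type u
  θ : A → A
  φ : A → A
  m : A → B
  θθ : θ ∘ θ = id
  φφ : φ ∘ φ = id
  braid : θ ∘ φ ∘ θ = φ ∘ θ ∘ φ

/-- Morphisms of involutive-2-links. -/
structure I2LHom (L M : I2L.{u}) : Type u where
  f : L.A → M.A
  g : L.B → M.B
  commθ : f ∘ L.θ = M.θ ∘ f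
  commφ : f ∘ L.φ = M.φ ∘ f
  commm : M.m ∘ f = g ∘ L.m

theorem I2LHom.ext' {L M : I2L.{u}} {u v : I2LHom L M}
    (h1 : u.f = v.f) (h2 : u.g = v.g) : u = v := by
  cases u; cases v; simp_all

/-- The category of involutive-2-links in the category of types. -/
instance : Category I2L.{u} where
  Hom := I2LHom
  id L := ⟨id, id, rfl, rfl, rfl⟩
  comp u v := ⟨v.f ∘ u.f, v.g ∘ u.g,
    by rw [Function.comp_assoc, u.commθ, ← Function.comp_assoc, v.commθ,
      Function.comp_assoc],
    by rw [Function.comp_assoc, u.commφ, ← Function.comp_assoc, v.commφ,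
      Function.comp_assoc],
    by rw [← Function.comp_assoc, v.commm, Function.comp_assoc, u.commm,
      ← Function.comp_assoc]⟩
  id_comp u := I2LHom.ext' rfl rfl
  comp_id u := I2LHom.ext' rfl rfl
  assoc u v w := I2LHom.ext' rfl rfl

/-- Morphisms of internal groupoids (internal functors). -/
structure IntGpdHom (G H : IntGpd.{u}) : Type u where
  f₀ : G.C₀ → H.C₀
  f₁ : G.C₁ → H.C₁
  hd : ∀ x, H.d (f₁ x) = f₀ (G.d x)
  hc : ∀ x, H.c (f₁ x) = f₀ (G.c x)
  he : ∀ a, f₁ (G.e a) = H.e (f₀ a)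
  hi : ∀ x, f₁ (G.i x) = H.i (f₁ x)
  hm : ∀ y x (h : G.d y = G.c x) (h' : H.d (f₁ y) = H.c (f₁ x)),
    f₁ (G.m y x h) = H.m (f₁ y) (f₁ x) h'

theorem IntGpdHom.ext' {G H : IntGpd.{u}} {u v : IntGpdHom G H}
    (h0 : u.f₀ = v.f₀) (h1 : u.f₁ = v.f₁) : u = v := by
  cases u; cases v; simp_all

/-- The category of internal groupoids in the category of types. -/
instance : Category IntGpd.{u} where
  Hom := IntGpdHom
  id G := ⟨id, id, fun _ => rfl, fun _ => rfl, fun _ => rfl, fun _ => rfl,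
    fun y x h h' => G.m_congr rfl rfl h h'⟩
  comp {G H K} u v :=
    ⟨v.f₀ ∘ u.f₀, v.f₁ ∘ u.f₁,
      fun x => by simp [v.hd, u.hd],
      fun x => by simp [v.hc, u.hc],
      fun a => by simp [u.he, v.he],
      fun x => by simp [u.hi, v.hi],
      fun y x h h' => by
        simp only [Function.comp_apply]
        rw [u.hm y x h (by rw [u.hd, u.hc, h]),
          v.hm _ _ (by rw [u.hd, u.hc, h]) h']⟩
  id_comp u := IntGpdHom.ext' rfl rfl
  comp_id u := IntGpdHom.ext' rfl rfl
  assoc u v w := IntGpdHom.ext' rfl rfl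

/-- The object part of the functor `F`: it forgets the underlying reflexive
graph, keeps `m : C₂ → C₁` and contracts the remaining information into the
two involutions `θ = ⟨i ∘ π₁, m⟩` and `φ = ⟨m, i ∘ π₂⟩`. -/
def FObj (G : IntGpd.{u}) : I2L.{u} where
  A := G.Pairs
  B := G.C₁
  θ := G.θp
  φ := G.φp
  m := G.mp
  θθ := G.θθ
  φφ := G.φφ
  braid := G.braid

/-- The morphism part of the functor `F`. -/
def FHom {G H : IntGpd.{u}} (u : G ⟶ H) : FObj G ⟶ FObj H where
  f p := ⟨(u.f₁ p.1.1, u.f₁ p.1.2), by rw [u.hd, u.hc, p.2]⟩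
  g := u.f₁
  commθ := by
    funext p
    apply Subtype.ext
    apply Prod.ext
    · exact u.hi p.1.1
    · exact u.hm p.1.1 p.1.2 p.2 _
  commφ := by
    funext p
    apply Subtype.ext
    apply Prod.ext
    · exact u.hm p.1.1 p.1.2 p.2 _
    · exact u.hi p.1.2
  commm := by
    funext p
    exact (u.hm p.1.1 p.1.2 p.2 _).symm

/-- Involutive-2-links which are unital and associative. -/
def GoodLink (L : I2L.{u}) : Prop :=
  IsUnitalLink L.θ L.φ L.m ∧ IsAssociativeLink L.θ L.φ L.m

/-- The conditions for `(f₀, f₁)` to underlie a morphism of internal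
groupoids (together with the preservation of composition, inversion). -/
def IsGpdMorphOn (G G' : IntGpd.{u}) (f₁ : G.C₁ → G'.C₁) (f₀ : G.C₀ → G'.C₀) : Prop :=
  (∀ x, G'.d (f₁ x) = f₀ (G.d x)) ∧
  (∀ x, G'.c (f₁ x) = f₀ (G.c x)) ∧
  (∀ a, f₁ (G.e a) = G'.e (f₀ a))

section Aux

variable {G G' : IntGpd.{u}} {f₂ : G.Pairs → G'.Pairs} {f₁ : G.C₁ → G'.C₁}

/-- `mp ∘ θp` is the second projection. -/
theorem mp_θp (G : IntGpd.{u}) (p : G.Pairs) : G.mp (G.θp p) = p.val.2 := by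
  obtain ⟨⟨y, x⟩, h⟩ := p
  exact G.m_inv_m y x h _

/-- `mp ∘ φp` is the first projection. -/
theorem mp_φp (G : IntGpd.{u}) (p : G.Pairs) : G.mp (G.φp p) = p.val.1 := by
  obtain ⟨⟨y, x⟩, h⟩ := p
  exact G.m_m_inv y x h _

theorem aux_comp (hθ : G'.θp ∘ f₂ = f₂ ∘ G.θp) (hφ : G'.φp ∘ f₂ = f₂ ∘ G.φp)
    (hm : G'.mp ∘ f₂ = f₁ ∘ G.mp) :
    ∀ p : G.Pairs, (f₂ p).val = (f₁ p.val.1, f₁ p.val.2) := by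
  intro p
  have h1 : (f₂ p).val.1 = f₁ p.val.1 := by
    have h := congrFun hm (G.φp p)
    simp only [Function.comp_apply] at h
    have hφp := congrFun hφ p
    simp only [Function.comp_apply] at hφp
    rw [← hφp] at h
    simpa only [mp_φp] using h
  have h2 : (f₂ p).val.2 = f₁ p.val.2 := by
    have h := congrFun hm (G.θp p)
    simp only [Function.comp_apply] at h
    have hθp := congrFun hθ p
    simp only [Function.comp_apply] at hθp
    rw [← hθp] at h
    simpa only [mp_θp] using h
  exact Prod.ext h1 h2

theorem aux_dc (hθ : G'.θp ∘ f₂ = f₂ ∘ G.θp) (hφ : G'.φp ∘ f₂ = f₂ ∘ G.φp)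
    (hm : G'.mp ∘ f₂ = f₁ ∘ G.mp) :
    ∀ y x, G.d y = G.c x → G'.d (f₁ y) = G'.c (f₁ x) := by
  intro y x h
  have := (f₂ ⟨(y, x), h⟩).2
  rwa [aux_comp hθ hφ hm ⟨(y, x), h⟩] at this

theorem aux_hm (hθ : G'.θp ∘ f₂ = f₂ ∘ G.θp) (hφ : G'.φp ∘ f₂ = f₂ ∘ G.φp)
    (hm : G'.mp ∘ f₂ = f₁ ∘ G.mp) :
    ∀ y x (h : G.d y = G.c x) (h' : G'.d (f₁ y) = G'.c (f₁ x)),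
      f₁ (G.m y x h) = G'.m (f₁ y) (f₁ x) h' := by
  intro y x h h'
  have h0 := congrFun hm ⟨(y, x), h⟩
  have hc := aux_comp hθ hφ hm ⟨(y, x), h⟩
  exact h0.symm.trans
    (G'.m_congr (congrArg Prod.fst hc) (congrArg Prod.snd hc) (f₂ ⟨(y, x), h⟩).2 h')

theorem aux_hi (hθ : G'.θp ∘ f₂ = f₂ ∘ G.θp) (hφ : G'.φp ∘ f₂ = f₂ ∘ G.φp)
    (hm : G'.mp ∘ f₂ = f₁ ∘ G.mp) :
    ∀ x, f₁ (G.i x) = G'.i (f₁ x) := by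
  intro x
  set p : G.Pairs := ⟨(x, G.e (G.d x)), by rw [G.ce]⟩ with hp
  have h1 := congrFun hθ p
  simp only [Function.comp_apply] at h1
  have h2 := congrArg (fun q : G'.Pairs => q.val.1) h1
  simp only [aux_comp hθ hφ hm] at h2
  have h3 : (G'.θp (f₂ p)).val.1 = G'.i ((f₂ p).val.1) := rfl
  rw [h3, aux_comp hθ hφ hm p] at h2
  exact h2.symm

theorem aux_he_fix (hθ : G'.θp ∘ f₂ = f₂ ∘ G.θp) (hφ : G'.φp ∘ f₂ = f₂ ∘ G.φp)
    (hm : G'.mp ∘ f₂ = f₁ ∘ G.mp) :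
    ∀ a, G'.d (f₁ (G.e a)) = G'.c (f₁ (G.e a)) ∧
      f₁ (G.e a) = G'.e (G'.c (f₁ (G.e a))) := by
  intro a
  have hdc : G'.d (f₁ (G.e a)) = G'.c (f₁ (G.e a)) :=
    aux_dc hθ hφ hm _ _ (by rw [G.de, G.ce])
  refine ⟨hdc, ?_⟩
  set u := f₁ (G.e a) with hu
  -- i' u = u
  have hiu : G'.i u = u := by
    rw [hu, ← aux_hi hθ hφ hm, G.ie]
  -- m' u u = u
  have hmu : G'.m u u hdc = u := by
    have := aux_hm hθ hφ hm (G.e a) (G.e a) (by rw [G.de, G.ce]) hdc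
    rw [← this]
    congr 1
    rw [G.m_congr (y := G.e a) (y' := G.e (G.c (G.e a))) (x := G.e a) (x' := G.e a)
      (by rw [G.ce]) rfl _ (by rw [G.de, G.ce])]
    exact G.idl (G.e a) _
  -- invr: m' u (i' u) = e' (c' u)
  have := G'.invr u (by rw [G'.ci, hdc])
  rw [G'.m_congr (y := u) (y' := u) (x := G'.i u) (x' := u) rfl hiu _ hdc] at this
  rw [hmu] at this
  exact this

theorem aux_morph (hθ : G'.θp ∘ f₂ = f₂ ∘ G.θp) (hφ : G'.φp ∘ f₂ = f₂ ∘ G.φp)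
    (hm : G'.mp ∘ f₂ = f₁ ∘ G.mp) :
    IsGpdMorphOn G G' f₁ (fun a => G'.c (f₁ (G.e a))) := by
  refine ⟨?_, ?_, ?_⟩
  · intro x
    have := (f₂ ⟨(x, G.e (G.d x)), by rw [G.ce]⟩).2
    rwa [aux_comp hθ hφ hm ⟨(x, G.e (G.d x)), by rw [G.ce]⟩] at this
  · intro x
    have := (f₂ ⟨(G.e (G.c x), x), by rw [G.de]⟩).2
    rw [aux_comp hθ hφ hm ⟨(G.e (G.c x), x), by rw [G.de]⟩] at this
    simp only
    rw [← this, (aux_he_fix hθ hφ hm (G.c x)).1]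
  · intro b
    exact (aux_he_fix hθ hφ hm b).2

theorem aux_unique (hθ : G'.θp ∘ f₂ = f₂ ∘ G.θp) (hφ : G'.φp ∘ f₂ = f₂ ∘ G.φp)
    (hm : G'.mp ∘ f₂ = f₁ ∘ G.mp) :
    ∃! f₀ : G.C₀ → G'.C₀, IsGpdMorphOn G G' f₁ f₀ := by
  refine ⟨fun a => G'.c (f₁ (G.e a)), aux_morph hθ hφ hm, ?_⟩
  intro f₀' h'
  funext a
  have := h'.2.1 (G.e a)
  rw [G.ce] at this
  exact this.symm

end Aux

/-- The functor `F` is full and faithful: a morphism of involutive-2-links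
`(f₂, f₁) : F(C) → F(C')` between the images of two internal groupoids is
componentwise (`f₂(x, y) = (f₁ x, f₁ y)`), `f₁` preserves composition,
inverses and identities, and there is a unique object-map
`f₀ = d' ∘ f₁ ∘ e = c' ∘ f₁ ∘ e` making `(f₂, f₁, f₀)` a morphism of
internal groupoids; hence the hom-map of `F` is bijective. -/
theorem F_full_and_faithful (G G' : IntGpd.{u})
    (f₂ : G.Pairs → G'.Pairs) (f₁ : G.C₁ → G'.C₁)
    (hθ : G'.θp ∘ f₂ = f₂ ∘ G.θp)
    (hφ : G'.φp ∘ f₂ = f₂ ∘ G.φp)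
    (hm : G'.mp ∘ f₂ = f₁ ∘ G.mp) :
    (∀ p : G.Pairs, (f₂ p).val = (f₁ p.val.1, f₁ p.val.2)) ∧
    (∀ y x, G.d y = G.c x → G'.d (f₁ y) = G'.c (f₁ x)) ∧
    (∀ y x (h : G.d y = G.c x) (h' : G'.d (f₁ y) = G'.c (f₁ x)),
      f₁ (G.m y x h) = G'.m (f₁ y) (f₁ x) h') ∧
    (f₁ ∘ G.i = G'.i ∘ f₁) ∧
    (∀ x, f₁ (G.e (G.d x)) = G'.e (G'.d (f₁ x))) ∧
    (∀ x, f₁ (G.e (G.c x)) = G'.e (G'.c (f₁ x))) ∧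
    (∀ a, G'.d (f₁ (G.e a)) = G'.c (f₁ (G.e a))) ∧
    (∃! f₀ : G.C₀ → G'.C₀, IsGpdMorphOn G G' f₁ f₀) ∧
    IsGpdMorphOn G G' f₁ (fun a => G'.d (f₁ (G.e a))) ∧
    IsGpdMorphOn G G' f₁ (fun a => G'.c (f₁ (G.e a))) ∧
    (∀ (H H' : IntGpd.{u}),
      Function.Bijective (fun u : H ⟶ H' => (FHom u : FObj H ⟶ FObj H'))) := by
  refine ⟨aux_comp hθ hφ hm, aux_dc hθ hφ hm, aux_hm hθ hφ hm,
    funext fun x => aux_hi hθ hφ hm x, ?_, ?_,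
    fun a => (aux_he_fix hθ hφ hm a).1, aux_unique hθ hφ hm, ?_, aux_morph hθ hφ hm, ?_⟩
  · intro x
    rw [(aux_he_fix hθ hφ hm (G.d x)).2, (aux_morph hθ hφ hm).1 x]
  · intro x
    rw [(aux_he_fix hθ hφ hm (G.c x)).2, (aux_morph hθ hφ hm).2.1 x]
  · have : (fun a => G'.d (f₁ (G.e a))) = (fun a => G'.c (f₁ (G.e a))) :=
      funext fun a => (aux_he_fix hθ hφ hm a).1
    rw [this]
    exact aux_morph hθ hφ hm
  · intro H H'
    constructor
    · intro u v huv
      have hg : u.f₁ = v.f₁ := congrArg I2LHom.g huv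
      refine IntGpdHom.ext' ?_ hg
      funext a
      have h1 := u.hd (H.e a)
      have h2 := v.hd (H.e a)
      rw [H.de] at h1 h2
      rw [← h1, ← h2, hg]
    · intro v
      have hθ' : H'.θp ∘ v.f = v.f ∘ H.θp := v.commθ.symm
      have hφ' : H'.φp ∘ v.f = v.f ∘ H.φp := v.commφ.symm
      have hm' : H'.mp ∘ v.f = v.g ∘ H.mp := v.commm
      refine ⟨⟨fun a => H'.c (v.g (H.e a)), v.g,
        (aux_morph hθ' hφ' hm').1, (aux_morph hθ' hφ' hm').2.1,
        (aux_morph hθ' hφ' hm').2.2, aux_hi hθ' hφ' hm',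
        aux_hm hθ' hφ' hm'⟩, ?_⟩
      refine I2LHom.ext' ?_ rfl
      funext p
      exact Subtype.ext (aux_comp hθ' hφ' hm' p).symm
end

section
/- Let G be a groupoid with object set C₀, morphism set C₁ and composable-pairs set C₂ = {(y, x) : dom y = cod x}, and let m(y, x) = y∘x, θ(y, x) = (y⁻¹, y∘x), φ(y, x) = (y∘x, x⁻¹). Then the involutive-2-link (θ, φ, m : C₂ → C₁) is unital, with e₁(x) = (x, id_{dom x}) and e₂(x) = (id_{cod x}, x), and associative, the bi-exactness of (m∘φ, m∘θ) = (π₁, π₂) being witnessed by d = dom, c = cod and by C₃ the set of composable triples with its two projections. -/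
open CategoryTheory

universe u

/-- The set of morphisms of a groupoid `G`, bundled with their (co)domains. -/
structure GMor (G : Type u) [Groupoid.{u} G] : Type u where
  src : G
  tgt : G
  hom : src ⟶ tgt

variable {G : Type u} [Groupoid.{u} G]

/-- Composable pairs `(y, x)` with `dom y = cod x`. -/
def GPairs (G : Type u) [Groupoid.{u} G] : Type u :=
  {p : GMor G × GMor G // p.1.src = p.2.tgt}

/-- Composable triples. -/
def GTriples (G : Type u) [Groupoid.{u} G] : Type u :=
  {t : GMor G × GMor G × GMor G // t.1.src = t.2.1.tgt ∧ t.2.1.src = t.2.2.tgt}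

/-- Composition `m(y, x) = y ∘ x` of a composable pair. -/
def mG : GPairs G → GMor G :=
  fun p => ⟨p.1.2.src, p.1.1.tgt, p.1.2.hom ≫ eqToHom p.2.symm ≫ p.1.1.hom⟩

/-- The inverse of a morphism. -/
def invG : GMor G → GMor G :=
  fun a => ⟨a.tgt, a.src, Groupoid.inv a.hom⟩

/-- The identity morphism at an object. -/
def idG (a : G) : GMor G := ⟨a, a, 𝟙 a⟩

/-- `θ(y, x) = (y⁻¹, y ∘ x)`. -/
def θG : GPairs G → GPairs G := fun p => ⟨(invG p.1.1, mG p), rfl⟩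

/-- `φ(y, x) = (y ∘ x, x⁻¹)`. -/
def φG : GPairs G → GPairs G := fun p => ⟨(mG p, invG p.1.2), rfl⟩

/-- `e₁(x) = (x, id_{dom x})`. -/
def e₁G : GMor G → GPairs G := fun x => ⟨(x, idG x.src), rfl⟩

/-- `e₂(x) = (id_{cod x}, x)`. -/
def e₂G : GMor G → GPairs G := fun x => ⟨(idG x.tgt, x), rfl⟩

/-- `d = dom`. -/
def dG : GMor G → G := fun x => x.src

/-- `c = cod`. -/
def cG : GMor G → G := fun x => x.tgt

/-- First projection of composable triples, `p₁(z, y, x) = (z, y)`. -/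
def p₁G : GTriples G → GPairs G := fun t => ⟨(t.1.1, t.1.2.1), t.2.1⟩

/-- Second projection of composable triples, `p₂(z, y, x) = (y, x)`. -/
def p₂G : GTriples G → GPairs G := fun t => ⟨(t.1.2.1, t.1.2.2), t.2.2⟩

open Limits in
lemma types_pb {P X Y Z : Type u} (fst : P → X) (snd : P → Y) (f : X → Z) (g : Y → Z)
    (comm : ∀ p, f (fst p) = g (snd p))
    (mono : ∀ p p', fst p = fst p' → snd p = snd p' → p = p')
    (surj : ∀ x y, f x = g y → ∃ p, fst p = x ∧ snd p = y) :
    IsPullback (C := Type u) (TypeCat.ofHom fst) (TypeCat.ofHom snd) (TypeCat.ofHom f) (TypeCat.ofHom g) := by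
  have w : CommSq (C := Type u) (TypeCat.ofHom fst) (TypeCat.ofHom snd) (TypeCat.ofHom f) (TypeCat.ofHom g) :=
    ⟨by ext p; exact comm p⟩
  have hc : ∀ (s : PullbackCone (TypeCat.ofHom f) (TypeCat.ofHom g)) a, f (s.fst a) = g (s.snd a) :=
    fun s a => types_congr_hom s.condition a
  refine IsPullback.of_isLimit' w (PullbackCone.IsLimit.mk w.w
    (fun s => TypeCat.ofHom fun a => (surj (s.fst a) (s.snd a) (hc s a)).choose) ?_ ?_ ?_)
  · intro s
    ext a
    exact (surj (s.fst a) (s.snd a) (hc s a)).choose_spec.1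
  · intro s
    ext a
    exact (surj (s.fst a) (s.snd a) (hc s a)).choose_spec.2
  · intro s m h1 h2
    ext a
    have spec := (surj (s.fst a) (s.snd a) (hc s a)).choose_spec
    exact mono _ _ ((types_congr_hom h1 a).trans spec.1.symm) ((types_congr_hom h2 a).trans spec.2.symm)

open Limits in
lemma types_po {P X Y Z : Type u} (fst : P → X) (snd : P → Y) (f : X → Z) (g : Y → Z)
    (comm : ∀ p, f (fst p) = g (snd p))
    (sec : Z → X) (hsec : ∀ z, f (sec z) = z)
    (key1 : ∀ {W : Type u} (a : X → W) (b : Y → W), (∀ p, a (fst p) = b (snd p)) →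
      ∀ x, a (sec (f x)) = a x)
    (key2 : ∀ {W : Type u} (a : X → W) (b : Y → W), (∀ p, a (fst p) = b (snd p)) →
      ∀ y, a (sec (g y)) = b y) :
    IsPushout (C := Type u) (TypeCat.ofHom fst) (TypeCat.ofHom snd) (TypeCat.ofHom f) (TypeCat.ofHom g) := by
  have w : CommSq (C := Type u) (TypeCat.ofHom fst) (TypeCat.ofHom snd) (TypeCat.ofHom f) (TypeCat.ofHom g) :=
    ⟨by ext p; exact comm p⟩
  have hc : ∀ (s : PushoutCocone (TypeCat.ofHom fst) (TypeCat.ofHom snd)) p, s.inl (fst p) = s.inr (snd p) :=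
    fun s p => types_congr_hom s.condition p
  refine IsPushout.of_isColimit' w (PushoutCocone.IsColimit.mk w.w
    (fun s => TypeCat.ofHom fun z => s.inl (sec z)) ?_ ?_ ?_)
  · intro s
    ext x
    exact key1 (fun x => s.inl x) (fun y => s.inr y) (hc s) x
  · intro s
    ext y
    exact key2 (fun x => s.inl x) (fun y => s.inr y) (hc s) y
  · intro s m h1 h2
    ext z
    have : m (f (sec z)) = s.inl (sec z) := types_congr_hom h1 (sec z)
    rw [hsec] at this
    exact this

lemma mφ_eq (p : GPairs G) : mG (φG p) = p.1.1 := by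
  obtain ⟨⟨⟨ys, yt, yf⟩, ⟨xs, xt, xf⟩⟩, (h : ys = xt)⟩ := p
  subst h
  simp [mG, φG, invG]

lemma mθ_eq (p : GPairs G) : mG (θG p) = p.1.2 := by
  obtain ⟨⟨⟨ys, yt, yf⟩, ⟨xs, xt, xf⟩⟩, (h : ys = xt)⟩ := p
  subst h
  simp [mG, θG, invG]

lemma gpairs_ext {p q : GPairs G} (h1 : p.1.1 = q.1.1) (h2 : p.1.2 = q.1.2) : p = q :=
  Subtype.ext (Prod.ext h1 h2)

lemma jm_left : JointlyMono (mG (G := G)) (mG ∘ θG) := by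
  intro a a' hm hθ
  have hx : a.1.2 = a'.1.2 := by
    simpa [mθ_eq] using hθ
  obtain ⟨⟨⟨ys, yt, yf⟩, x⟩, (h : ys = x.tgt)⟩ := a
  obtain ⟨⟨⟨ys', yt', yf'⟩, x'⟩, (h' : ys' = x'.tgt)⟩ := a'
  obtain rfl : x = x' := hx
  subst h h'
  simp only [mG, GMor.mk.injEq, heq_eq_eq, true_and, and_true] at hm
  obtain ⟨rfl, hm2⟩ := hm
  have h3 := eq_of_heq hm2
  simp only [eqToHom_refl, Category.id_comp] at h3
  rw [cancel_epi] at h3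
  exact gpairs_ext (by rw [h3]) rfl

lemma jm_right : JointlyMono (mG (G := G)) (mG ∘ φG) := by
  intro a a' hm hφ
  have hy : a.1.1 = a'.1.1 := by
    simpa [mφ_eq] using hφ
  obtain ⟨⟨y, ⟨xs, xt, xf⟩⟩, (h : y.src = xt)⟩ := a
  obtain ⟨⟨y', ⟨xs', xt', xf'⟩⟩, (h' : y'.src = xt')⟩ := a'
  obtain rfl : y = y' := hy
  have hxt : xt = xt' := h.symm.trans h'
  subst hxt h
  simp only [mG, GMor.mk.injEq, heq_eq_eq, true_and, and_true] at hm
  obtain ⟨rfl, hm2⟩ := hm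
  have h3 := eq_of_heq hm2
  simp only [eqToHom_refl, Category.id_comp] at h3
  rw [cancel_mono] at h3
  exact gpairs_ext rfl (by rw [h3])

/-- For any groupoid `G`, the involutive-2-link `(θ, φ, m)` with
`θ(y, x) = (y⁻¹, y ∘ x)` and `φ(y, x) = (y ∘ x, x⁻¹)` is unital, with
`e₁(x) = (x, id_{dom x})` and `e₂(x) = (id_{cod x}, x)`, and associative,
the bi-exactness of `(m ∘ φ, m ∘ θ)` being witnessed by `d = dom`,
`c = cod` and by the object of composable triples with its two
projections. -/
theorem groupoid_link_unital_and_associative (G : Type u) [Groupoid.{u} G] :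
    -- unital, witnessed by e₁, e₂
    JointlyMono (mG (G := G)) (mG ∘ θG) ∧
    JointlyMono (mG (G := G)) (mG ∘ φG) ∧
    mG (G := G) ∘ e₁G = id ∧
    mG (G := G) ∘ e₂G = id ∧
    θG (G := G) ∘ e₂G = e₂G ∧
    φG (G := G) ∘ e₁G = e₁G ∧
    mG (G := G) ∘ θG ∘ φG ∘ e₂G = mG ∘ φG ∘ θG ∘ e₁G ∧
    (mG (G := G) ∘ θG ∘ e₁G) ∘ (mG ∘ φG) = (mG ∘ φG ∘ e₂G) ∘ (mG ∘ θG) ∧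
    (mG (G := G) ∘ θG ∘ e₁G) ∘ mG = (mG ∘ θG ∘ e₁G) ∘ (mG ∘ θG) ∧
    (mG (G := G) ∘ φG ∘ e₂G) ∘ mG = (mG ∘ φG ∘ e₂G) ∘ (mG ∘ φG) ∧
    -- associative, with the indicated bi-exactness witnesses
    Bicartesian (mG (G := G) ∘ φG) (mG ∘ θG) dG cG ∧
    Bicartesian (p₂G (G := G)) p₁G (mG ∘ φG) (mG ∘ θG) ∧
    (∃ m₁ m₂ : GTriples G → GPairs G,
      (mG ∘ φG) ∘ m₁ = mG ∘ p₁G ∧ (mG ∘ θG) ∘ m₁ = (mG ∘ θG) ∘ p₂G ∧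
      (mG ∘ φG) ∘ m₂ = (mG ∘ φG) ∘ p₁G ∧ (mG ∘ θG) ∘ m₂ = mG ∘ p₂G ∧
      mG ∘ m₁ = mG ∘ m₂) := by
  refine ⟨jm_left, jm_right, ?_, ?_, ?_, ?_, ?_, ?_, ?_, ?_, ⟨?_, ?_⟩, ⟨?_, ?_⟩, ?_⟩
  · -- m ∘ e₁ = id
    funext x
    obtain ⟨xs, xt, xf⟩ := x
    simp [mG, e₁G, idG]
  · -- m ∘ e₂ = id
    funext x
    obtain ⟨xs, xt, xf⟩ := x
    simp [mG, e₂G, idG]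
    exact (congrArg (xf ≫ ·) (eqToHom_refl xt rfl)).trans (Category.comp_id xf)
  · -- θ ∘ e₂ = e₂
    funext x
    apply gpairs_ext
    · obtain ⟨xs, xt, xf⟩ := x
      simp [θG, e₂G, invG, idG]
    · show mG (e₂G x) = x
      obtain ⟨xs, xt, xf⟩ := x
      simp [mG, e₂G, idG]
      exact (congrArg (xf ≫ ·) (eqToHom_refl xt rfl)).trans (Category.comp_id xf)
  · -- φ ∘ e₁ = e₁
    funext x
    apply gpairs_ext
    · show mG (e₁G x) = x
      obtain ⟨xs, xt, xf⟩ := x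
      simp [mG, e₁G, idG]
    · obtain ⟨xs, xt, xf⟩ := x
      simp [φG, e₁G, invG, idG]
  · -- m∘θ∘φ∘e₂ = m∘φ∘θ∘e₁
    funext x
    show mG (θG (φG (e₂G x))) = mG (φG (θG (e₁G x)))
    rw [mθ_eq, mφ_eq]
    rfl
  · -- (m∘θ∘e₁)∘(m∘φ) = (m∘φ∘e₂)∘(m∘θ)
    funext p
    simp only [Function.comp_apply, mθ_eq, mφ_eq, e₁G, e₂G]
    refine (mθ_eq _).trans ((congrArg idG p.2).trans ?_); symm; exact mφ_eq _
  · -- (m∘θ∘e₁)∘m = (m∘θ∘e₁)∘(m∘θ)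
    funext p
    simp only [Function.comp_apply, mθ_eq, e₁G]
    refine (mθ_eq _).trans ?_; symm; exact mθ_eq _
  · -- (m∘φ∘e₂)∘m = (m∘φ∘e₂)∘(m∘φ)
    funext p
    simp only [Function.comp_apply, mφ_eq, e₂G]
    refine (mφ_eq _).trans ?_; symm; exact mφ_eq _
  · -- first square: pullback
    apply types_pb
    · intro p
      simp only [Function.comp_apply, mθ_eq, mφ_eq]
      exact p.2
    · intro p p' h1 h2
      simp only [Function.comp_apply, mθ_eq, mφ_eq] at h1 h2
      exact gpairs_ext h1 h2
    · intro x y hxy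
      exact ⟨⟨(x, y), hxy⟩, mφ_eq _, mθ_eq _⟩
  · -- first square: pushout
    apply types_po (sec := idG) (hsec := fun z => rfl)
    · intro p
      simp only [Function.comp_apply, mθ_eq, mφ_eq]
      exact p.2
    · intro W a b hab x
      have h1 : a x = b (idG x.src) := by
        have := hab ⟨(x, idG x.src), rfl⟩
        exact (congrArg a (mφ_eq _)).symm.trans (this.trans (congrArg b (mθ_eq _)))
      have h2 : a (idG x.src) = b (idG x.src) := by
        have := hab ⟨(idG x.src, idG x.src), rfl⟩
        exact (congrArg a (mφ_eq _)).symm.trans (this.trans (congrArg b (mθ_eq _)))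
      exact h2.trans h1.symm
    · intro W a b hab y
      have := hab ⟨(idG y.tgt, y), rfl⟩
      exact (congrArg a (mφ_eq _)).symm.trans (this.trans (congrArg b (mθ_eq _)))
  · -- second square: pullback
    apply types_pb
    · intro t
      simp only [Function.comp_apply, mθ_eq, mφ_eq, p₁G, p₂G]
      refine (mφ_eq _).trans ?_; symm; exact mθ_eq _
    · intro t t' h1 h2
      apply Subtype.ext
      have e1 : t.1.2.1 = t'.1.2.1 := congrArg (fun q : GPairs G => q.1.1) h1
      have e2 : t.1.2.2 = t'.1.2.2 := congrArg (fun q : GPairs G => q.1.2) h1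
      have e3 : t.1.1 = t'.1.1 := congrArg (fun q : GPairs G => q.1.1) h2
      exact Prod.ext e3 (Prod.ext e1 e2)
    · intro q q' hqq
      simp only [Function.comp_apply, mθ_eq, mφ_eq] at hqq
      refine ⟨⟨(q'.1.1, q.1.1, q.1.2), ⟨q'.2.trans (congrArg GMor.tgt hqq.symm), q.2⟩⟩, ?_, ?_⟩
      · exact gpairs_ext rfl rfl
      · exact gpairs_ext rfl hqq
  · -- second square: pushout
    apply types_po (sec := e₁G)
      (hsec := fun q => mφ_eq (e₁G q))
    · intro t
      simp only [Function.comp_apply, mθ_eq, mφ_eq, p₁G, p₂G]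
      refine (mφ_eq _).trans ?_; symm; exact mθ_eq _
    · intro W a b hab q
      obtain ⟨⟨y, x⟩, (h : y.src = x.tgt)⟩ := q
      have hfst : mG (φG ⟨(y, x), h⟩) = y := mφ_eq _
      show a (e₁G (mG (φG ⟨(y, x), h⟩))) = a ⟨(y, x), h⟩
      rw [hfst]
      have h1 : a ⟨(y, x), h⟩ = b ⟨(idG y.tgt, y), rfl⟩ := by
        have := hab ⟨(idG y.tgt, y, x), ⟨rfl, h⟩⟩
        simpa [p₁G, p₂G] using this
      have h2 : a (e₁G y) = b ⟨(idG y.tgt, y), rfl⟩ := by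
        have := hab ⟨(idG y.tgt, y, idG y.src), ⟨rfl, rfl⟩⟩
        have e : (⟨(y, idG y.src), rfl⟩ : GPairs G) = e₁G y := gpairs_ext rfl rfl
        simpa [p₁G, p₂G, e] using this
      exact h2.trans h1.symm
    · intro W a b hab q
      obtain ⟨⟨y, x⟩, (h : y.src = x.tgt)⟩ := q
      have hsnd : mG (θG ⟨(y, x), h⟩) = x := mθ_eq _
      show a (e₁G (mG (θG ⟨(y, x), h⟩))) = b ⟨(y, x), h⟩
      rw [hsnd]
      have := hab ⟨(y, x, idG x.src), ⟨h, rfl⟩⟩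
      have e : (⟨(x, idG x.src), rfl⟩ : GPairs G) = e₁G x := gpairs_ext rfl rfl
      simpa [p₁G, p₂G, e] using this
  · -- associativity
    refine ⟨fun t => ⟨(mG (p₁G t), t.1.2.2), t.2.2⟩,
            fun t => ⟨(t.1.1, mG (p₂G t)), t.2.1⟩, ?_, ?_, ?_, ?_, ?_⟩
    · funext t
      exact mφ_eq _
    · funext t
      refine (mθ_eq _).trans ?_; symm; exact mθ_eq _
    · funext t
      refine (mφ_eq _).trans ?_; symm; exact mφ_eq _
    · funext t
      exact mθ_eq _
    · funext t
      obtain ⟨⟨⟨zs, zt, zf⟩, ⟨ys, yt, yf⟩, ⟨xs, xt, xf⟩⟩, ⟨(h1 : zs = yt), (h2 : ys = xt)⟩⟩ := t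
      subst h1 h2
      show (GMor.mk xs zt (xf ≫ eqToHom rfl ≫ (yf ≫ eqToHom rfl ≫ zf)) : GMor G) =
        GMor.mk xs zt ((xf ≫ eqToHom rfl ≫ yf) ≫ eqToHom rfl ≫ zf)
      simp [mG, p₁G, p₂G]
end
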